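/- arXiv:2512.19348 — 2 statements merged into one kernel-verified Lean document; each statement's English description precedes it below -/
import Mathlib

section
/- Let A be a commutative ring, let f ∈ A be a nonzerodivisor, and let M be an A-module. Then M is flat over A if and only if the following three conditions hold: (i) multiplication by f is injective on M; (ii) the quotient M/fM is a flat module over the quotient ring A/(f); and (iii) the localization M_f is a flat module over the localization A_f. -/
open TensorProduct LinearMap

section Aux

universe u v

variable {R : Type u} [CommRing R] {M : Type v} [AddCommGroup M] [Module R M]

private lemma exists_fin_tmul {N : Type*} [AddCommGroup N] [Module R N] (t : N ⊗[R] M) :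
    ∃ (n : ℕ) (a : Fin n → N) (x : Fin n → M), t = ∑ i, a i ⊗ₜ[R] x i := by
  induction t with
  | zero => exact ⟨0, finZeroElim, finZeroElim, by simp⟩
  | tmul n m => exact ⟨1, fun _ => n, fun _ => m, by simp⟩
  | add s t hs ht =>
      obtain ⟨n1, a1, x1, rfl⟩ := hs
      obtain ⟨n2, a2, x2, rfl⟩ := ht
      refine ⟨n1 + n2, Fin.append a1 a2, Fin.append x1 x2, ?_⟩
      rw [Fin.sum_univ_add]
      simp

/-- Universe-polymorphic equational criterion for flatness, forward direction. -/
private theorem triv_of_flat [Module.Flat R M] {n : ℕ} {a : Fin n → R} {x : Fin n → M}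
    (h : ∑ i, a i • x i = 0) :
    ∃ (m : ℕ) (c : Fin n → Fin m → R) (y : Fin m → M),
      (∀ i, x i = ∑ j, c i j • y j) ∧ ∀ j, ∑ i, a i * c i j = 0 := by
  classical
  set I : Ideal R := Ideal.span (Set.range a) with hI
  have haI : ∀ i, a i ∈ I := fun i => Ideal.subset_span (Set.mem_range_self i)
  set a' : Fin n → I := fun i => ⟨a i, haI i⟩ with ha'
  set π : (Fin n →₀ R) →ₗ[R] I := Finsupp.linearCombination R a' with hπ
  have hπs : Function.Surjective π := by
    rw [← LinearMap.range_eq_top, hπ, Finsupp.range_linearCombination]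
    apply Submodule.map_injective_of_injective I.injective_subtype
    rw [Submodule.map_span, Submodule.map_top, Submodule.range_subtype]
    have h1 : I.subtype '' Set.range a' = Set.range a := by
      rw [← Set.range_comp]; rfl
    rw [h1]
  set t : I ⊗[R] M := ∑ i, a' i ⊗ₜ x i with htdef
  have ht : rTensor M I.subtype t = 0 := by
    have h1 : rTensor M I.subtype t = ∑ i, a i ⊗ₜ x i := by
      rw [htdef, map_sum]; rfl
    apply (TensorProduct.lid R M).injective
    rw [h1, map_zero, map_sum]
    simpa using h
  have ht0 : t = 0 := by
    have hinj := Module.Flat.rTensor_preserves_injective_linearMap (M := M)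
      I.subtype I.injective_subtype
    exact hinj (ht.trans (map_zero _).symm)
  set u : (Fin n →₀ R) ⊗[R] M := ∑ i, Finsupp.single i (1 : R) ⊗ₜ x i with hudef
  have hu : rTensor M π u = t := by
    rw [hudef, htdef, map_sum]
    refine Finset.sum_congr rfl fun i _ => ?_
    rw [rTensor_tmul, hπ, Finsupp.linearCombination_single, one_smul]
  have hex := rTensor_exact (M := ↥(LinearMap.ker π)) M
    (LinearMap.exact_subtype_ker_map π) hπs
  have hmem := (hex u).mp (hu.trans ht0)
  obtain ⟨v, hv⟩ := hmem
  obtain ⟨m, k, y, rfl⟩ := exists_fin_tmul (R := R) (M := M) (N := ↥(LinearMap.ker π)) v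
  rw [map_sum] at hv
  refine ⟨m, fun i j => (k j : Fin n →₀ R) i, y, ?_, ?_⟩
  · intro i
    have h2 := congrArg (fun z => TensorProduct.finsuppScalarLeft R M (Fin n) z i) hv
    simp only [hudef, map_sum, Finsupp.coe_finset_sum, Finset.sum_apply, rTensor_tmul,
      TensorProduct.finsuppScalarLeft_apply_tmul_apply, Finsupp.single_apply] at h2
    have h3 : ∑ i' : Fin n, (if i' = i then (1:R) else 0) • x i' = x i := by
      rw [Finset.sum_congr rfl (fun i' (_ : i' ∈ Finset.univ) =>
        show ((if i' = i then (1:R) else 0) • x i') = if i' = i then x i' else 0 by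
          split <;> simp)]
      simp
    exact (h2.trans h3).symm
  · intro j
    have h0 : π ((k j : Fin n →₀ R)) = 0 := (k j).2
    have h2 : ((Finsupp.linearCombination R a' ((k j : Fin n →₀ R)) : I) : R) = 0 := by
      rw [show Finsupp.linearCombination R a' ((k j : Fin n →₀ R))
        = π ((k j : Fin n →₀ R)) from rfl, h0]
      rfl
    rw [Finsupp.linearCombination_apply] at h2
    rw [Finsupp.sum_fintype _ _ (fun i => by simp)] at h2
    simp only [AddSubmonoidClass.coe_finset_sum, SetLike.val_smul, smul_eq_mul] at h2
    calc ∑ i, a i * (k j : Fin n →₀ R) i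
        = ∑ i, (k j : Fin n →₀ R) i * a i :=
          Finset.sum_congr rfl fun i _ => mul_comm _ _
      _ = 0 := h2

/-- Universe-polymorphic equational criterion for flatness, backward direction. -/
private theorem flat_of_triv
    (H : ∀ (n : ℕ) (a : Fin n → R) (x : Fin n → M), ∑ i, a i • x i = 0 →
      ∃ (m : ℕ) (c : Fin n → Fin m → R) (y : Fin m → M),
        (∀ i, x i = ∑ j, c i j • y j) ∧ ∀ j, ∑ i, a i * c i j = 0) :
    Module.Flat R M := by
  rw [Module.Flat.iff_rTensor_injective]
  intro I _
  rw [injective_iff_map_eq_zero]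
  intro t ht
  obtain ⟨n, z, x, rfl⟩ := exists_fin_tmul t
  have hrel : ∑ i, (z i : R) • x i = 0 := by
    have h1 : rTensor M I.subtype (∑ i, z i ⊗ₜ x i) = ∑ i, (z i : R) ⊗ₜ x i := by
      rw [map_sum]; rfl
    have h2 := congrArg (TensorProduct.lid R M) (h1.symm.trans ht)
    simpa using h2
  obtain ⟨m, c, y, hxy, hcol⟩ := H n (fun i => (z i : R)) x hrel
  have hz0 : ∀ j, (∑ i, c i j • z i) = (0 : I) := by
    intro j
    have hcoe : ((∑ i, c i j • z i : I) : R) = ∑ i, c i j * (z i : R) := by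
      push_cast
      rfl
    ext
    rw [hcoe, Finset.sum_congr rfl fun i (_ : i ∈ Finset.univ) =>
      mul_comm (c i j) ((z i : R))]
    exact hcol j
  calc ∑ i, z i ⊗ₜ[R] x i = ∑ i, z i ⊗ₜ[R] (∑ j, c i j • y j) :=
        Finset.sum_congr rfl fun i _ => by rw [← hxy i]
    _ = ∑ i, ∑ j, (c i j • z i) ⊗ₜ[R] y j := by
        refine Finset.sum_congr rfl fun i _ => ?_
        rw [TensorProduct.tmul_sum]
        exact Finset.sum_congr rfl fun j _ => by
          rw [TensorProduct.tmul_smul, TensorProduct.smul_tmul']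
    _ = ∑ j, (∑ i, c i j • z i) ⊗ₜ[R] y j := by
        rw [Finset.sum_comm]
        exact Finset.sum_congr rfl fun j _ => by rw [TensorProduct.sum_tmul]
    _ = 0 := by simp [hz0]

/-- Simultaneous trivialization of finitely many relations, for a flat module. -/
private theorem simul_of_flat [Module.Flat R M] :
    ∀ (r : ℕ) {nn : ℕ} (c : Fin r → Fin nn → R) (y : Fin nn → M),
      (∀ i, ∑ j, c i j • y j = 0) →
      ∃ (m : ℕ) (d : Fin nn → Fin m → R) (w : Fin m → M),
        (∀ j, y j = ∑ k, d j k • w k) ∧ ∀ i k, ∑ j, c i j * d j k = 0 := by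
  intro r
  induction r with
  | zero =>
    intro nn c y _
    classical
    refine ⟨nn, fun j k => if j = k then 1 else 0, y, fun j => ?_, fun i => i.elim0⟩
    rw [Finset.sum_congr rfl (fun k (_ : k ∈ Finset.univ) => by
      rw [show ((if j = k then (1:R) else 0) • y k) = if j = k then y k else 0 by
        split <;> simp])]
    simp
  | succ r ih =>
    intro nn c y hy
    obtain ⟨m₁, e, z, hyz, he⟩ := triv_of_flat (hy 0)
    have hz : ∀ i : Fin r, ∑ k, (∑ j, c i.succ j * e j k) • z k = 0 := by
      intro i
      have h1 : ∑ k, (∑ j, c i.succ j * e j k) • z k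
          = ∑ j, c i.succ j • (∑ k, e j k • z k) := by
        simp_rw [Finset.sum_smul, Finset.smul_sum, mul_smul]
        rw [Finset.sum_comm]
      rw [h1, Finset.sum_congr rfl fun j (_ : j ∈ Finset.univ) => by rw [← hyz j]]
      exact hy i.succ
    obtain ⟨m, d', w, hzw, hd'⟩ := ih (fun i k => ∑ j, c i.succ j * e j k) z hz
    refine ⟨m, fun j k => ∑ k₁, e j k₁ * d' k₁ k, w, ?_, ?_⟩
    · intro j
      calc y j = ∑ k₁, e j k₁ • z k₁ := hyz j
        _ = ∑ k₁, e j k₁ • ∑ k, d' k₁ k • w k :=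
            Finset.sum_congr rfl fun k₁ _ => by rw [← hzw k₁]
        _ = ∑ k, (∑ k₁, e j k₁ * d' k₁ k) • w k := by
            simp_rw [Finset.smul_sum, Finset.sum_smul, mul_smul]
            rw [Finset.sum_comm]
    · intro i k
      refine Fin.cases ?_ (fun i => ?_) i
      · calc ∑ j, c 0 j * ∑ k₁, e j k₁ * d' k₁ k
            = ∑ k₁, (∑ j, c 0 j * e j k₁) * d' k₁ k := by
              simp_rw [Finset.mul_sum, Finset.sum_mul, mul_assoc]
              rw [Finset.sum_comm]
          _ = 0 := by simp [he]
      · calc ∑ j, c i.succ j * ∑ k₁, e j k₁ * d' k₁ k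
            = ∑ k₁, (∑ j, c i.succ j * e j k₁) * d' k₁ k := by
              simp_rw [Finset.mul_sum, Finset.sum_mul, mul_assoc]
              rw [Finset.sum_comm]
          _ = 0 := hd' i k

private lemma mem_span_singleton_smul_top {f : R} {z : M} :
    z ∈ (Ideal.span {f} • ⊤ : Submodule R M) ↔ ∃ u : M, f • u = z := by
  constructor
  · intro hz
    refine Submodule.smul_induction_on hz (fun r hr m _ => ?_) ?_
    · obtain ⟨b, hb⟩ := Ideal.mem_span_singleton'.mp hr
      exact ⟨b • m, by rw [smul_smul, mul_comm, hb]⟩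
    · rintro p q ⟨u, rfl⟩ ⟨v, rfl⟩
      exact ⟨u + v, by rw [smul_add]⟩
  · rintro ⟨u, rfl⟩
    exact Submodule.smul_mem_smul (Ideal.mem_span_singleton_self f) trivial

private lemma loc_uniform_ring {A : Type u} [CommRing A] (f : A) {ι : Type*} [Fintype ι]
    (z : ι → Localization (Submonoid.powers f)) :
    ∃ (N : ℕ) (b : ι → A), ∀ i,
      (algebraMap A (Localization (Submonoid.powers f)) f) ^ N * z i
        = algebraMap A (Localization (Submonoid.powers f)) (b i) := by
  set φ := algebraMap A (Localization (Submonoid.powers f)) with hφ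
  have h : ∀ i, ∃ Nb : ℕ × A, φ f ^ Nb.1 * z i = φ Nb.2 := by
    intro i
    obtain ⟨⟨b, s⟩, hb⟩ := IsLocalization.surj (Submonoid.powers f) (z i)
    obtain ⟨kk, hk⟩ := (Submonoid.mem_powers_iff (s : A) f).mp s.2
    refine ⟨(kk, b), ?_⟩
    rw [← map_pow, hk, mul_comm]
    exact hb
  choose Nb hNb using h
  set N := Finset.univ.sup fun i => (Nb i).1 with hN
  refine ⟨N, fun i => f ^ (N - (Nb i).1) * (Nb i).2, fun i => ?_⟩
  have hle : (Nb i).1 ≤ N :=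
    Finset.le_sup (f := fun i => (Nb i).1) (Finset.mem_univ i)
  calc φ f ^ N * z i = φ f ^ (N - (Nb i).1) * (φ f ^ (Nb i).1 * z i) := by
        rw [← mul_assoc, ← pow_add, Nat.sub_add_cancel hle]
    _ = _ := by rw [hNb i, ← map_pow, ← map_mul]

private lemma loc_uniform_mod {A : Type u} [CommRing A] (f : A)
    {M : Type v} [AddCommGroup M] [Module A M] {ι : Type*} [Fintype ι]
    (z : ι → LocalizedModule (Submonoid.powers f) M) :
    ∃ (N : ℕ) (b : ι → M), ∀ i,
      f ^ N • z i = LocalizedModule.mkLinearMap (Submonoid.powers f) M (b i) := by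
  have h : ∀ i, ∃ Nb : ℕ × M, f ^ Nb.1 • z i
      = LocalizedModule.mkLinearMap (Submonoid.powers f) M Nb.2 := by
    intro i
    induction z i using LocalizedModule.induction_on with
    | h m s =>
      obtain ⟨kk, hk⟩ := (Submonoid.mem_powers_iff (s : A) f).mp s.2
      refine ⟨(kk, m), ?_⟩
      rw [LocalizedModule.mkLinearMap_apply, LocalizedModule.smul'_mk]
      have h1 : f ^ kk • m = s • m := by
        rw [Submonoid.smul_def, ← hk]
      rw [h1, LocalizedModule.mk_cancel]
  choose Nb hNb using h
  set N := Finset.univ.sup fun i => (Nb i).1 with hN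
  refine ⟨N, fun i => f ^ (N - (Nb i).1) • (Nb i).2, fun i => ?_⟩
  have hle : (Nb i).1 ≤ N :=
    Finset.le_sup (f := fun i => (Nb i).1) (Finset.mem_univ i)
  calc f ^ N • z i = f ^ (N - (Nb i).1) • (f ^ (Nb i).1 • z i) := by
        rw [smul_smul, ← pow_add, Nat.sub_add_cancel hle]
    _ = _ := by rw [hNb i, LocalizedModule.mkLinearMap_apply,
        LocalizedModule.mkLinearMap_apply, LocalizedModule.smul'_mk]

/-- The descent step: if `f ^ N • x` admits a trivialization compatible with `a`,
then so does `x` itself, given injectivity of `f` on `M` and flatness of `M/fM`. -/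
private lemma descend {A : Type u} [CommRing A] {M : Type v} [AddCommGroup M] [Module A M]
    {f : A} (hf : f ∈ nonZeroDivisors A)
    (hinj : Function.Injective (fun m : M => f • m))
    (hQ : Module.Flat (A ⧸ Ideal.span {f}) (M ⧸ (Ideal.span {f} • ⊤ : Submodule A M)))
    {n : ℕ} (a : Fin n → A) (x : Fin n → M) :
    ∀ (N : ℕ) (m : ℕ) (c : Fin n → Fin m → A) (y : Fin m → M),
      (∀ i, f ^ N • x i = ∑ j, c i j • y j) → (∀ j, ∑ i, a i * c i j = 0) →
      ∃ (m' : ℕ) (c' : Fin n → Fin m' → A) (y' : Fin m' → M),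
        (∀ i, x i = ∑ j, c' i j • y' j) ∧ ∀ j, ∑ i, a i * c' i j = 0 := by
  intro N
  induction N with
  | zero =>
    intro m c y h1 h2
    exact ⟨m, c, y, fun i => by simpa using h1 i, h2⟩
  | succ N ih =>
    intro m c y h1 h2
    haveI := hQ
    set I : Ideal A := Ideal.span {f} with hIdef
    have hq : ∀ i, ∑ j, (Ideal.Quotient.mk I (c i j)) •
        (Submodule.Quotient.mk (p := (I • ⊤ : Submodule A M)) (y j)) = 0 := by
      intro i
      have hsum : ∑ j, (Ideal.Quotient.mk I (c i j)) •
          (Submodule.Quotient.mk (p := (I • ⊤ : Submodule A M)) (y j))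
          = Submodule.Quotient.mk (p := (I • ⊤ : Submodule A M)) (∑ j, c i j • y j) := by
        rw [Finset.sum_congr rfl fun j (_ : j ∈ Finset.univ) =>
          (Module.Quotient.mk_smul_mk M I (c i j) (y j))]
        exact (map_sum ((I • ⊤ : Submodule A M)).mkQ _ _).symm
      rw [hsum, ← h1 i, Submodule.Quotient.mk_eq_zero]
      refine Submodule.smul_mem_smul ?_ trivial
      exact Ideal.mem_span_singleton.mpr (dvd_pow_self f (Nat.succ_ne_zero N))
    obtain ⟨m₂, dq, wq, hyw, hcol2⟩ := simul_of_flat (R := A ⧸ I)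
      n (fun i j => Ideal.Quotient.mk I (c i j))
      (fun j => Submodule.Quotient.mk (p := (I • ⊤ : Submodule A M)) (y j)) hq
    choose d hd using fun (j : Fin m) (kk : Fin m₂) => Ideal.Quotient.mk_surjective (dq j kk)
    choose w hw using fun kk : Fin m₂ => Submodule.Quotient.mk_surjective
      (I • ⊤ : Submodule A M) (wq kk)
    have hyu : ∀ j, ∃ u : M, f • u = y j - ∑ kk, d j kk • w kk := by
      intro j
      have hmem : y j - ∑ kk, d j kk • w kk ∈ (I • ⊤ : Submodule A M) := by
        rw [← Submodule.Quotient.mk_eq_zero]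
        have h3 : Submodule.Quotient.mk (p := (I • ⊤ : Submodule A M))
            (y j - ∑ kk, d j kk • w kk)
            = Submodule.Quotient.mk (p := (I • ⊤ : Submodule A M)) (y j)
              - ∑ kk, (Ideal.Quotient.mk I (d j kk)) •
                  Submodule.Quotient.mk (p := (I • ⊤ : Submodule A M)) (w kk) := by
          rw [show (Submodule.Quotient.mk (y j - ∑ kk, d j kk • w kk) :
              M ⧸ (I • ⊤ : Submodule A M))
            = ((I • ⊤ : Submodule A M)).mkQ (y j - ∑ kk, d j kk • w kk) from rfl]
          rw [map_sub, map_sum]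
          rfl
        rw [h3]
        rw [Finset.sum_congr rfl fun kk (_ : kk ∈ Finset.univ) => by rw [hd j kk, hw kk]]
        rw [← hyw j, sub_self]
      exact mem_span_singleton_smul_top.mp hmem
    choose u hu using hyu
    have hecol : ∀ i kk, ∃ ee : A, ee * f = ∑ j, c i j * d j kk := by
      intro i kk
      have h4 : Ideal.Quotient.mk I (∑ j, c i j * d j kk) = 0 := by
        rw [map_sum]
        rw [Finset.sum_congr rfl fun j (_ : j ∈ Finset.univ) => by
          rw [map_mul, hd j kk]]
        exact hcol2 i kk
      rw [Ideal.Quotient.eq_zero_iff_mem] at h4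
      exact Ideal.mem_span_singleton'.mp h4
    choose e he using hecol
    have hyj : ∀ j, y j = (∑ kk, d j kk • w kk) + f • u j := by
      intro j
      rw [hu j]
      abel
    have hmain : ∀ i, f • (f ^ N • x i)
        = f • (∑ kk, e i kk • w kk + ∑ j, c i j • u j) := by
      intro i
      have h5 : f • (f ^ N • x i) = f ^ (N + 1) • x i := by
        rw [smul_smul, ← pow_succ']
      have e1 : ∑ j, c i j • y j
          = (∑ j, ∑ kk, (c i j * d j kk) • w kk) + ∑ j, f • (c i j • u j) := by
        rw [← Finset.sum_add_distrib]
        refine Finset.sum_congr rfl fun j _ => ?_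
        rw [hyj j, smul_add, Finset.smul_sum]
        have b2 : c i j • (f • u j) = f • (c i j • u j) := by
          rw [smul_smul, smul_smul, mul_comm]
        rw [Finset.sum_congr rfl fun kkk (_ : kkk ∈ Finset.univ) =>
          smul_smul (c i j) (d j kkk) (w kkk), b2]
      have e2 : (∑ j, ∑ kk, (c i j * d j kk) • w kk) = ∑ kk, (e i kk * f) • w kk := by
        rw [Finset.sum_comm]
        refine Finset.sum_congr rfl fun kkk _ => ?_
        rw [← Finset.sum_smul, ← he i kkk]
      rw [h5, h1 i, e1, e2, smul_add]
      congr 1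
      · rw [Finset.smul_sum]
        exact Finset.sum_congr rfl fun kkk _ => by rw [smul_smul, mul_comm]
      · rw [Finset.smul_sum]
    have hstep : ∀ i, f ^ N • x i = ∑ kk, e i kk • w kk + ∑ j, c i j • u j :=
      fun i => hinj (hmain i)
    refine ih (m₂ + m) (fun i => Fin.append (e i) (c i)) (Fin.append w u) ?_ ?_
    · intro i
      rw [Fin.sum_univ_add]
      simpa using hstep i
    · intro j
      refine Fin.addCases ?_ ?_ j
      · intro kk
        have h6 : (∑ i, a i * e i kk) * f = 0 := by
          calc (∑ i, a i * e i kk) * f = ∑ i, a i * (e i kk * f) := by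
                rw [Finset.sum_mul]
                exact Finset.sum_congr rfl fun i _ => by ring
            _ = ∑ i, a i * (∑ j', c i j' * d j' kk) :=
                Finset.sum_congr rfl fun i _ => by rw [he i kk]
            _ = ∑ j', (∑ i, a i * c i j') * d j' kk := by
                simp_rw [Finset.mul_sum, Finset.sum_mul, mul_assoc]
                rw [Finset.sum_comm]
            _ = 0 := by
                rw [Finset.sum_congr rfl fun j' (_ : j' ∈ Finset.univ) => by
                  rw [h2 j']]
                simp
        have h7 := hf.2 _ h6
        rw [← h7]
        exact Finset.sum_congr rfl fun i _ => by simp [Fin.append_left]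
      · intro j'
        rw [← h2 j']
        exact Finset.sum_congr rfl fun i _ => by simp [Fin.append_right]

end Aux

/-- Flatness over a commutative ring `A` can be tested on the constructible stratification
given by a nonzerodivisor `f`: `M` is flat over `A` iff multiplication by `f` is injective
on `M`, `M/fM` is flat over `A/(f)`, and `M_f` is flat over `A_f`. -/
theorem flat_iff_of_nonZeroDivisor {A : Type*} [CommRing A] (f : A)
    (hf : f ∈ nonZeroDivisors A) (M : Type*) [AddCommGroup M] [Module A M] :
    Module.Flat A M ↔
      (Function.Injective (fun m : M => f • m) ∧
        Module.Flat (A ⧸ Ideal.span {f})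
          (M ⧸ (Ideal.span {f} • ⊤ : Submodule A M)) ∧
        Module.Flat (Localization (Submonoid.powers f))
          (LocalizedModule (Submonoid.powers f) M)) := by
  constructor
  · intro hM
    refine ⟨?_, ?_, inferInstance⟩
    · -- injectivity of multiplication by `f`
      have hinj : Function.Injective (LinearMap.lsmul A A f) := by
        intro p q hpq
        simp only [LinearMap.lsmul_apply, smul_eq_mul] at hpq
        have h0 : (p - q) * f = 0 := by
          rw [sub_mul, mul_comm p f, mul_comm q f, hpq, sub_self]
        have h1 := hf.2 _ h0
        rwa [sub_eq_zero] at h1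
      have h2 := Module.Flat.rTensor_preserves_injective_linearMap (M := M)
        (LinearMap.lsmul A A f) hinj
      have heq : (fun m : M => f • m)
          = (TensorProduct.lid A M) ∘ (rTensor M (LinearMap.lsmul A A f))
            ∘ (TensorProduct.lid A M).symm := by
        funext m
        simp
      rw [heq]
      exact (TensorProduct.lid A M).injective.comp
        (h2.comp (TensorProduct.lid A M).symm.injective)
    · -- flatness of `M/fM` over `A/(f)`
      set I : Ideal A := Ideal.span {f} with hI
      have e := TensorProduct.quotTensorEquivQuotSMul M I
      have hsmul : ∀ (s : A ⧸ I) (t : (A ⧸ I) ⊗[A] M), e (s • t) = s • e t := by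
        intro s t
        obtain ⟨b, rfl⟩ := Ideal.Quotient.mk_surjective s
        have h1 : (Ideal.Quotient.mk I b) • t = b • t := by
          rw [← Ideal.Quotient.algebraMap_eq, algebraMap_smul]
        obtain ⟨mq, hmq⟩ := Submodule.Quotient.mk_surjective (I • ⊤ : Submodule A M) (e t)
        rw [h1, map_smul, ← hmq]
        exact ((Submodule.Quotient.mk_smul _ b mq).symm).trans
          (Module.Quotient.mk_smul_mk M I b mq).symm
      letI e' : ((A ⧸ I) ⊗[A] M) ≃ₗ[A ⧸ I] (M ⧸ (I • ⊤ : Submodule A M)) :=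
        { toFun := e, map_add' := map_add e, map_smul' := hsmul,
          invFun := e.symm, left_inv := e.left_inv, right_inv := e.right_inv }
      exact Module.Flat.of_linearEquiv e'.symm
  · rintro ⟨hinj, hQ, hL⟩
    haveI := hL
    apply flat_of_triv
    intro n a x hrel
    set S := Submonoid.powers f with hS
    set φ := algebraMap A (Localization S) with hφ
    have hφinj : Function.Injective ⇑φ := by
      refine IsLocalization.injective (M := S) (Localization S) ?_
      intro s hs
      obtain ⟨kk, hk⟩ := (Submonoid.mem_powers_iff s f).mp hs
      rw [← hk]
      exact pow_mem hf kk
    have hrel' : ∑ i, φ (a i) • (LocalizedModule.mkLinearMap S M (x i)) = 0 := by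
      have h1 : ∀ i, φ (a i) • (LocalizedModule.mkLinearMap S M (x i))
          = LocalizedModule.mkLinearMap S M (a i • x i) := by
        intro i
        rw [algebraMap_smul, map_smul]
      rw [Finset.sum_congr rfl fun i (_ : i ∈ Finset.univ) => h1 i, ← map_sum, hrel,
        map_zero]
    obtain ⟨m₀, c₀, y₀, hxy₀, hcol₀⟩ := triv_of_flat hrel'
    obtain ⟨Nc, cA, hc⟩ := loc_uniform_ring f (fun p : Fin n × Fin m₀ => c₀ p.1 p.2)
    obtain ⟨Ny, yM, hy⟩ := loc_uniform_mod f y₀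
    have hA : ∀ (g : A) (w' : LocalizedModule S M), g • w' = φ g • w' :=
      fun g w' => (algebraMap_smul _ g w').symm
    have hkey : ∀ i, LocalizedModule.mkLinearMap S M (f ^ (Nc + Ny) • x i)
        = LocalizedModule.mkLinearMap S M (∑ j, cA (i, j) • yM j) := by
      intro i
      rw [map_smul, hxy₀ i, map_sum, Finset.smul_sum]
      refine Finset.sum_congr rfl fun j _ => ?_
      calc f ^ (Nc + Ny) • (c₀ i j • y₀ j)
          = (φ f ^ (Nc + Ny) * c₀ i j) • y₀ j := by
            rw [hA, smul_smul, map_pow]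
        _ = (φ (cA (i, j)) * φ f ^ Ny) • y₀ j := by
            rw [← hc (i, j)]
            change _ = (φ f ^ Nc * c₀ i j * φ f ^ Ny) • y₀ j
            ring_nf
        _ = φ (cA (i, j)) • (f ^ Ny • y₀ j) := by
            rw [mul_smul, hA (f ^ Ny), map_pow]
        _ = LocalizedModule.mkLinearMap S M (cA (i, j) • yM j) := by
            rw [hy j, ← hA, map_smul]
    have hexk : ∀ i, ∃ kk : ℕ,
        f ^ kk • (f ^ (Nc + Ny) • x i) = f ^ kk • ∑ j, cA (i, j) • yM j := by
      intro i
      obtain ⟨s, hs⟩ := IsLocalizedModule.exists_of_eq (S := S)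
        (f := LocalizedModule.mkLinearMap S M) (hkey i)
      obtain ⟨kk, hk⟩ := (Submonoid.mem_powers_iff (s : A) f).mp s.2
      refine ⟨kk, ?_⟩
      have h8 : ∀ w' : M, f ^ kk • w' = s • w' := fun w' => by
        rw [Submonoid.smul_def, ← hk]
      rw [h8, h8]
      exact hs
    choose kk hkk using hexk
    set K := Finset.univ.sup kk with hK
    have hfin : ∀ i, f ^ (K + (Nc + Ny)) • x i = ∑ j, cA (i, j) • (f ^ K • yM j) := by
      intro i
      have hle : kk i ≤ K := Finset.le_sup (f := kk) (Finset.mem_univ i)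
      have hsplit : K + (Nc + Ny) = K - kk i + kk i + (Nc + Ny) := by omega
      calc f ^ (K + (Nc + Ny)) • x i
          = f ^ (K - kk i) • (f ^ kk i • (f ^ (Nc + Ny) • x i)) := by
            rw [smul_smul, smul_smul, ← pow_add, ← pow_add, ← hsplit]
        _ = f ^ (K - kk i) • (f ^ kk i • ∑ j, cA (i, j) • yM j) := by rw [hkk i]
        _ = f ^ K • ∑ j, cA (i, j) • yM j := by
            rw [smul_smul, ← pow_add, Nat.sub_add_cancel hle]
        _ = ∑ j, cA (i, j) • (f ^ K • yM j) := by
            rw [Finset.smul_sum]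
            exact Finset.sum_congr rfl fun j _ => by
              rw [smul_smul, smul_smul, mul_comm]
    have hcolA : ∀ j, ∑ i, a i * cA (i, j) = 0 := by
      intro j
      apply hφinj
      rw [map_zero, map_sum]
      calc ∑ i, φ (a i * cA (i, j)) = φ f ^ Nc * ∑ i, φ (a i) * c₀ i j := by
            rw [Finset.mul_sum]
            refine Finset.sum_congr rfl fun i _ => ?_
            rw [map_mul, ← hc (i, j)]
            ring
        _ = 0 := by rw [hcol₀ j, mul_zero]
    exact descend hf hinj hQ a x (K + (Nc + Ny)) m₀
      (fun i j => cA (i, j)) (fun j => f ^ K • yM j) hfin hcolA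
end

section
/- Let A be a commutative ring, let f ∈ A, and let M be an A-module. Regard the localization A_f = A[1/f] as an A-module. Assume that Hom_A(A_f, M) = 0 and that the first Ext group Ext¹_A(A_f, M) = 0 (these two vanishings express that the discrete module M is derived f-complete). If M/fM = 0 (equivalently, multiplication by f on M is surjective), then M = 0. -/
open CategoryTheory

/-- Classical Nakayama lemma for derived `f`-complete discrete modules: if
`Hom_A(A_f, M) = 0` and `Ext¹_A(A_f, M) = 0` (i.e. the discrete module `M` is derived
`f`-complete) and `M/fM = 0` (multiplication by `f` on `M` is surjective), then `M = 0`. -/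
theorem eq_zero_of_derived_complete_of_smul_surjective {A : Type} [CommRing A] (f : A)
    (M : Type) [AddCommGroup M] [Module A M]
    (h0 : Subsingleton (Localization (Submonoid.powers f) →ₗ[A] M))
    (h1 : Subsingleton
      (((Ext A (ModuleCat A) 1).obj
        (Opposite.op (ModuleCat.of A (Localization (Submonoid.powers f))))).obj
          (ModuleCat.of A M)))
    (hsurj : Function.Surjective (fun m : M => f • m)) :
    ∀ m : M, m = 0 := by
  intro m
  choose g hg using hsurj
  have hg' : ∀ x : M, f • g x = x := hg
  have key : ∀ (k : ℕ) (x : M), f ^ k • g^[k] x = x := by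
    intro k
    induction k with
    | zero => intro x; simp
    | succ n ih =>
      intro x
      rw [Function.iterate_succ_apply', pow_succ, mul_smul, hg', ih]
  have shift : ∀ (a : A) (k n : ℕ) (x : M), (f ^ k * a) • g^[k + n] x = a • g^[n] x := by
    intro a k n x
    rw [mul_comm, mul_smul, Function.iterate_add_apply, key]
  set exp : Submonoid.powers f → ℕ := fun s => s.2.choose with hexp
  have hexp_spec : ∀ s : Submonoid.powers f, f ^ exp s = (s : A) := fun s => s.2.choose_spec
  have core : ∀ (a c : A) (nb nd ne : ℕ), f ^ ne * (f ^ nd * a) = f ^ ne * (f ^ nb * c) →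
      a • g^[nb] m = c • g^[nd] m := by
    intro a c nb nd ne he
    have h1' : a • g^[nb] m = (f ^ (ne + nd) * a) • g^[(ne + nd) + nb] m :=
      (shift a (ne + nd) nb m).symm
    have h2' : c • g^[nd] m = (f ^ (ne + nb) * c) • g^[(ne + nb) + nd] m :=
      (shift c (ne + nb) nd m).symm
    rw [h1', h2']
    have hscal : f ^ (ne + nd) * a = f ^ (ne + nb) * c := by
      rw [pow_add, pow_add]
      linear_combination he
    have hidx : (ne + nd) + nb = (ne + nb) + nd := by omega
    rw [hscal, hidx]
  have H : ∀ {a c : A} {b d : Submonoid.powers f},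
      Localization.r (Submonoid.powers f) (a, b) (c, d) →
      a • g^[exp b] m = c • g^[exp d] m := by
    intro a c b d hr
    rw [Localization.r_iff_exists] at hr
    obtain ⟨e, he⟩ := hr
    obtain ⟨ne, hne⟩ := e.2
    have hne' : f ^ ne = (e : A) := hne
    refine core a c (exp b) (exp d) ne ?_
    rw [hne', hexp_spec, hexp_spec]
    exact he
  set φ₀ : Localization (Submonoid.powers f) → M :=
    fun x => Localization.liftOn x (fun r s => r • g^[exp s] m) H with hφ₀
  have phi_mk : ∀ (r : A) (s : Submonoid.powers f) (n : ℕ), f ^ n = (s : A) →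
      φ₀ (Localization.mk r s) = r • g^[n] m := by
    intro r s n hn
    rw [hφ₀]
    simp only [Localization.liftOn_mk]
    refine core r r (exp s) n 0 ?_
    rw [hn, hexp_spec]
  have φadd : ∀ x y, φ₀ (x + y) = φ₀ x + φ₀ y := by
    intro x y
    induction x using Localization.induction_on with
    | H p =>
    induction y using Localization.induction_on with
    | H q =>
    obtain ⟨a, b⟩ := p
    obtain ⟨c, d⟩ := q
    obtain ⟨nb, hnb⟩ := b.2
    obtain ⟨nd, hnd⟩ := d.2
    have hnb' : f ^ nb = (b : A) := hnb
    have hnd' : f ^ nd = (d : A) := hnd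
    rw [Localization.add_mk]
    rw [phi_mk _ _ (nb + nd) (by rw [pow_add, hnb', hnd', Submonoid.coe_mul]),
      phi_mk a b nb hnb', phi_mk c d nd hnd']
    simp only
    rw [← hnb', ← hnd', add_smul, shift c nb nd m, add_comm nb nd, shift a nd nb m, add_comm]
  have φsmul : ∀ (r : A) x, φ₀ (r • x) = r • φ₀ x := by
    intro r x
    induction x using Localization.induction_on with
    | H p =>
    obtain ⟨a, b⟩ := p
    obtain ⟨nb, hnb⟩ := b.2
    have hnb' : f ^ nb = (b : A) := hnb
    rw [Localization.smul_mk, phi_mk _ _ nb hnb', phi_mk a b nb hnb', smul_eq_mul, mul_smul]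
  let φ : Localization (Submonoid.powers f) →ₗ[A] M :=
    { toFun := φ₀, map_add' := φadd, map_smul' := φsmul }
  have hz : φ = 0 := Subsingleton.elim _ _
  have hm : φ₀ (Localization.mk 1 1) = m := by
    rw [phi_mk 1 1 0 (by simp)]
    simp
  calc m = φ (Localization.mk 1 1) := hm.symm
    _ = 0 := by rw [hz]; rfl
end
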